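/- arXiv:2105.01041 — 7 statements merged into one kernel-verified Lean document; each statement's English description precedes it below -/
import Mathlib

section
/- Let k ≥ 3 and let A be a k-th order supersymmetric tensor on ℝ^n that is orthogonally decomposable, i.e., A = Σ_{r=1}^n λ_r v_r∘v_r∘⋯∘v_r (k factors) with λ_r ∈ ℝ and {v_r} orthonormal. If x_0 = Σ_r c_r v_r and x_{t+1} = A x_t^{k-1} (the (k-1)-fold tensor-vector contraction), then for all q ≥ 0, x_q = Σ_{r=1}^n λ_r^{α(q)} c_r^{β(q)} v_r, where α(q) = ((k-1)^q - 1)/(k-2) and β(q) = (k-1)^q. -/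
open Finset

lemma alpha_succ (m q : ℕ) (hm : 2 ≤ m) :
    (m ^ (q + 1) - 1) / (m - 1) = m * ((m ^ q - 1) / (m - 1)) + 1 := by
  obtain ⟨d, rfl⟩ : ∃ d, m = d + 2 := ⟨m - 2, by omega⟩
  obtain ⟨a, ha⟩ : (d + 1) ∣ ((d + 2) ^ q - 1) := by
    have := Nat.sub_dvd_pow_sub_pow (d + 2) 1 q
    simpa using this
  have hpos : 1 ≤ (d + 2) ^ q := Nat.one_le_pow _ _ (by omega)
  have e1 : (d + 2) ^ q = (d + 1) * a + 1 := by omega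
  have e2 : (d + 2) ^ (q + 1) = (d + 1) * ((d + 2) * a + 1) + 1 := by
    rw [pow_succ, e1]; ring
  have h1 : (d + 2) ^ (q + 1) - 1 = (d + 1) * ((d + 2) * a + 1) := by omega
  rw [show d + 2 - 1 = d + 1 from rfl, h1, ha,
    Nat.mul_div_cancel_left _ (by omega : 0 < d + 1),
    Nat.mul_div_cancel_left _ (by omega : 0 < d + 1)]

/-- Explicit solution of the odeco multilinear dynamical system
`x_{t+1} = A x_t^{k-1} = ∑ r, λ_r ⟨v_r, x_t⟩^{k-1} v_r`. -/
theorem stmt0 (n k : ℕ) (hk : 3 ≤ k)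
    (lam : Fin n → ℝ) (v : Fin n → EuclideanSpace ℝ (Fin n))
    (hv : Orthonormal ℝ v)
    (c : Fin n → ℝ) (x : ℕ → EuclideanSpace ℝ (Fin n))
    (hx0 : x 0 = ∑ r, c r • v r)
    (hdyn : ∀ t, x (t + 1) = ∑ r, (lam r * (inner ℝ (v r) (x t) : ℝ) ^ (k - 1)) • v r) :
    ∀ q : ℕ,
      x q = ∑ r, (lam r ^ (((k - 1) ^ q - 1) / (k - 2)) * c r ^ ((k - 1) ^ q)) • v r := by
  intro q
  induction q with
  | zero => simpa using hx0
  | succ q ih =>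
      rw [hdyn q, ih]
      refine Finset.sum_congr rfl fun r _ => ?_
      have hinner : (inner ℝ (v r)
          (∑ s, (lam s ^ (((k - 1) ^ q - 1) / (k - 2)) * c s ^ ((k - 1) ^ q)) • v s) : ℝ)
          = lam r ^ (((k - 1) ^ q - 1) / (k - 2)) * c r ^ ((k - 1) ^ q) :=
        hv.inner_right_fintype _ r
      rw [hinner, mul_pow, ← pow_mul, ← pow_mul]
      have hm : 2 ≤ k - 1 := by omega
      have hα : ((k - 1) ^ (q + 1) - 1) / (k - 2) =
          (k - 1) * (((k - 1) ^ q - 1) / (k - 2)) + 1 := by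
        have := alpha_succ (k - 1) q hm
        have h2 : k - 1 - 1 = k - 2 := by omega
        rwa [h2] at this
      congr 1
      rw [hα, pow_succ, pow_add, pow_one]
      ring
end

section
/- Let k ≥ 3 and A an odeco k-th order supersymmetric tensor with orthogonal decomposition A = Σ_{r=1}^n λ_r v_r^{∘k}, {v_r} orthonormal, all λ_r ≠ 0. Let x_0 = Σ_r c_r v_r and define the trajectory x_{t+1} = A x_t^{k-1}. If |c_r| · |λ_r|^{1/(k-2)} < 1 for every r = 1,…,n, then ‖x_t‖ → 0 as t → ∞. -/
open Finset Filter

lemma aux_tendsto (k : ℕ) (hk : 3 ≤ k) (lam c : ℝ) (hlam : lam ≠ 0)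
    (a : ℕ → ℝ) (ha0 : a 0 = c)
    (harec : ∀ t, a (t + 1) = lam * a t ^ (k - 1))
    (hc : |c| * |lam| ^ ((1 : ℝ) / ((k : ℝ) - 2)) < 1) :
    Tendsto (fun t => |a t|) atTop (nhds 0) := by
  set L : ℝ := |lam| ^ ((1 : ℝ) / ((k : ℝ) - 2)) with hLdef
  have hlam' : (0:ℝ) < |lam| := abs_pos.mpr hlam
  have hL : 0 < L := Real.rpow_pos_of_pos hlam' _
  have hk2 : ((k : ℝ) - 2) ≠ 0 := by
    have : (3:ℝ) ≤ (k:ℝ) := by exact_mod_cast hk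
    linarith
  have hcast : ((k - 2 : ℕ) : ℝ) = (k:ℝ) - 2 := by
    push_cast [Nat.cast_sub (by omega : 2 ≤ k)]; ring
  have hLk : L ^ (k - 2) = |lam| := by
    rw [hLdef, ← Real.rpow_natCast (|lam| ^ ((1 : ℝ) / ((k : ℝ) - 2))) (k-2),
      ← Real.rpow_mul hlam'.le, hcast, one_div_mul_cancel hk2, Real.rpow_one]
  set u : ℕ → ℝ := fun t => |a t| * L with hu
  have hu0 : u 0 = |c| * L := by simp [hu, ha0]
  have hu0lt : u 0 < 1 := by rw [hu0]; exact hc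
  have hu0nn : 0 ≤ u 0 := mul_nonneg (abs_nonneg _) hL.le
  have hrec : ∀ t, u (t+1) = (u t) ^ (k - 1) := by
    intro t
    have h1 : L ^ (k-1) = |lam| * L := by
      have h : k - 1 = (k - 2) + 1 := by omega
      rw [h, pow_succ, hLk]
    simp only [hu, harec, abs_mul, abs_pow]
    rw [mul_pow]
    calc |lam| * |a t| ^ (k-1) * L = |a t| ^ (k-1) * (|lam| * L) := by ring
    _ = |a t| ^ (k-1) * L ^ (k-1) := by rw [h1]
  have hbound : ∀ t, u t ≤ u 0 ^ (t + 1) := by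
    intro t
    induction t with
    | zero => simp
    | succ t ih =>
      have hutnn : 0 ≤ u t := mul_nonneg (abs_nonneg _) hL.le
      have hut1 : u t ≤ 1 :=
        le_trans ih (pow_le_one₀ hu0nn hu0lt.le)
      have h3 : u t ^ (k-1) ≤ u t ^ 2 :=
        pow_le_pow_of_le_one hutnn hut1 (by omega)
      have h4 : u t ^ 2 ≤ (u 0 ^ (t+1)) ^ 2 := pow_le_pow_left₀ hutnn ih 2
      have h5 : (u 0 ^ (t+1))^2 ≤ u 0 ^ (t+2) := by
        rw [← pow_mul]
        exact pow_le_pow_of_le_one hu0nn hu0lt.le (by omega)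
      calc u (t+1) = u t ^ (k-1) := hrec t
      _ ≤ u t ^ 2 := h3
      _ ≤ (u 0 ^ (t+1))^2 := h4
      _ ≤ u 0 ^ (t+2) := h5
  have hgeo : Tendsto (fun t => u 0 ^ (t+1) / L) atTop (nhds 0) := by
    have h := tendsto_pow_atTop_nhds_zero_of_lt_one hu0nn hu0lt
    have h2 : Tendsto (fun t => u 0 ^ (t+1)) atTop (nhds 0) :=
      h.comp (tendsto_add_atTop_nat 1)
    simpa using h2.div_const L
  apply squeeze_zero (fun t => abs_nonneg _) _ hgeo
  intro t
  rw [le_div_iff₀ hL]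
  exact hbound t

/-- Asymptotic stability of the odeco multilinear dynamical system:
if `|c_r| |λ_r|^{1/(k-2)} < 1` for all `r`, then `‖x_t‖ → 0`. -/
theorem stmt1 (n k : ℕ) (hk : 3 ≤ k)
    (lam : Fin n → ℝ) (v : Fin n → EuclideanSpace ℝ (Fin n))
    (hv : Orthonormal ℝ v) (hlam : ∀ r, lam r ≠ 0)
    (c : Fin n → ℝ) (x : ℕ → EuclideanSpace ℝ (Fin n))
    (hx0 : x 0 = ∑ r, c r • v r)
    (hdyn : ∀ t, x (t + 1) = ∑ r, (lam r * (inner ℝ (v r) (x t) : ℝ) ^ (k - 1)) • v r)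
    (hc : ∀ r, |c r| * |lam r| ^ ((1 : ℝ) / ((k : ℝ) - 2)) < 1) :
    Tendsto (fun t => ‖x t‖) atTop (nhds 0) := by
  set a : Fin n → ℕ → ℝ := fun r t => (inner ℝ (v r) (x t) : ℝ) with ha
  have ha0 : ∀ r, a r 0 = c r := by
    intro r
    simp only [ha, hx0]
    exact hv.inner_right_fintype c r
  have harec : ∀ r t, a r (t + 1) = lam r * a r t ^ (k - 1) := by
    intro r t
    simp only [ha, hdyn t]
    exact hv.inner_right_fintype _ r
  have hx : ∀ t, x t = ∑ r, a r t • v r := by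
    intro t
    cases t with
    | zero =>
      rw [hx0]
      exact Finset.sum_congr rfl fun r _ => by rw [ha0 r]
    | succ t =>
      rw [hdyn t]
      exact Finset.sum_congr rfl fun r _ => by rw [harec r t]
  have hnorm : ∀ t, ‖x t‖ ≤ ∑ r, |a r t| := by
    intro t
    rw [hx t]
    calc ‖∑ r, a r t • v r‖ ≤ ∑ r, ‖a r t • v r‖ := norm_sum_le _ _
    _ = ∑ r, |a r t| := by
        refine Finset.sum_congr rfl fun r _ => ?_
        rw [norm_smul, hv.1 r, mul_one, Real.norm_eq_abs]
  have hsum : Tendsto (fun t => ∑ r, |a r t|) atTop (nhds 0) := by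
    have h0 : (0:ℝ) = ∑ r : Fin n, (0:ℝ) := by simp
    rw [h0]
    exact tendsto_finset_sum _ fun r _ =>
      aux_tendsto k hk (lam r) (c r) (hlam r) (a r) (ha0 r) (harec r) (hc r)
  exact squeeze_zero (fun t => norm_nonneg _) hnorm hsum
end

section
/- Let k ≥ 3 and A an odeco k-th order supersymmetric tensor with orthogonal decomposition A = Σ_{r=1}^n λ_r v_r^{∘k}, {v_r} orthonormal. Let x_0 = Σ_r c_r v_r and x_{t+1} = A x_t^{k-1}. If there exists r with |c_r| · |λ_r|^{1/(k-2)} > 1, then ‖x_t‖ → ∞ as t → ∞ (the equilibrium 0 is unstable). -/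
open Finset Filter

/-- Instability of the odeco multilinear dynamical system:
if `|c_r| |λ_r|^{1/(k-2)} > 1` for some `r`, then `‖x_t‖ → ∞`. -/
theorem stmt2 (n k : ℕ) (hk : 3 ≤ k)
    (lam : Fin n → ℝ) (v : Fin n → EuclideanSpace ℝ (Fin n))
    (hv : Orthonormal ℝ v)
    (c : Fin n → ℝ) (x : ℕ → EuclideanSpace ℝ (Fin n))
    (hx0 : x 0 = ∑ r, c r • v r)
    (hdyn : ∀ t, x (t + 1) = ∑ r, (lam r * (inner ℝ (v r) (x t) : ℝ) ^ (k - 1)) • v r)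
    (hc : ∃ r, 1 < |c r| * |lam r| ^ ((1 : ℝ) / ((k : ℝ) - 2))) :
    Tendsto (fun t => ‖x t‖) atTop atTop := by
  obtain ⟨r, hr⟩ := hc
  have hk2 : (1 : ℝ) ≤ (k : ℝ) - 2 := by
    have : (3 : ℝ) ≤ (k : ℝ) := by exact_mod_cast hk
    linarith
  have hexp : (1 : ℝ) / ((k : ℝ) - 2) ≠ 0 := by positivity
  have hlne : lam r ≠ 0 := by
    intro h
    rw [h, abs_zero, Real.zero_rpow hexp, mul_zero] at hr
    linarith
  set L : ℝ := |lam r| ^ ((1 : ℝ) / ((k : ℝ) - 2)) with hLdef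
  have hlpos : 0 < |lam r| := abs_pos.mpr hlne
  have hL : 0 < L := Real.rpow_pos_of_pos hlpos _
  set a : ℕ → ℝ := fun t => (inner ℝ (v r) (x t) : ℝ) with hadef
  have ha0 : a 0 = c r := by
    simp only [hadef, hx0]
    exact hv.inner_right_fintype c r
  have harec : ∀ t, a (t + 1) = lam r * (a t) ^ (k - 1) := by
    intro t
    simp only [hadef, hdyn t]
    exact hv.inner_right_fintype (fun s => lam s * (inner ℝ (v s) (x t) : ℝ) ^ (k - 1)) r
  set b : ℕ → ℝ := fun t => L * |a t| with hbdef
  have hb0 : 1 < b 0 := by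
    simp only [hbdef, ha0]
    rw [mul_comm]; exact hr
  have hLpow : L ^ (k - 1) = L * |lam r| := by
    rw [hLdef, ← Real.rpow_natCast (|lam r| ^ ((1:ℝ)/((k:ℝ)-2))) (k-1),
      ← Real.rpow_mul hlpos.le]
    have hcast : ((k - 1 : ℕ) : ℝ) = (k : ℝ) - 1 := by
      have : 1 ≤ k := by omega
      push_cast [this]; ring
    rw [hcast]
    have h1 : (1 : ℝ) / ((k:ℝ) - 2) * ((k:ℝ) - 1) = 1 / ((k:ℝ) - 2) + 1 := by
      field_simp
      ring
    rw [h1, Real.rpow_add hlpos, Real.rpow_one]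
  have hbrec : ∀ t, b (t + 1) = b t ^ (k - 1) := by
    intro t
    simp only [hbdef, harec t, abs_mul, abs_pow, mul_pow, hLpow]
    ring
  have hblow : ∀ t, b 0 ^ (t + 1) ≤ b t := by
    intro t
    induction t with
    | zero => simp
    | succ t ih =>
      have hbt1 : 1 < b t := lt_of_lt_of_le (one_lt_pow₀ hb0 (by omega)) ih
      have h1 : b t ^ (k - 2) * b t ≤ b (t + 1) := by
        rw [hbrec t, ← pow_succ]
        have : k - 2 + 1 ≤ k - 1 := by omega
        exact pow_le_pow_right₀ hbt1.le this
      have h2 : b 0 ≤ b t ^ (k - 2) := by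
        calc b 0 ≤ b 0 ^ (t + 1) := le_self_pow₀ hb0.le (by omega)
          _ ≤ b t := ih
          _ = b t ^ 1 := (pow_one _).symm
          _ ≤ b t ^ (k - 2) := pow_le_pow_right₀ hbt1.le (by omega)
      calc b 0 ^ (t + 1 + 1) = b 0 * b 0 ^ (t + 1) := by ring
        _ ≤ b t ^ (k - 2) * b t := mul_le_mul h2 ih (by positivity) (by positivity)
        _ ≤ b (t + 1) := h1
  have hbtend : Tendsto b atTop atTop := by
    refine tendsto_atTop_mono hblow ?_
    exact (tendsto_pow_atTop_atTop_of_one_lt hb0).comp (tendsto_add_atTop_nat 1)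
  have hmono : ∀ t, b t / L ≤ ‖x t‖ := by
    intro t
    rw [div_le_iff₀ hL, hbdef]
    have := abs_real_inner_le_norm (v r) (x t)
    rw [hv.1 r, one_mul] at this
    calc L * |a t| = |a t| * L := by ring
      _ ≤ ‖x t‖ * L := by
        exact mul_le_mul_of_nonneg_right this hL.le
  exact tendsto_atTop_mono hmono (hbtend.atTop_div_const hL)
end

section
/- Let k ≥ 3, A an odeco k-th order supersymmetric tensor with decomposition A = Σ_r λ_r v_r^{∘k} ({v_r} orthonormal), and let λ = max_r |λ_r|. If x_0 ∈ ℝ^n satisfies λ^{1/(k-2)} ‖x_0‖ < 1, then the trajectory x_{t+1} = A x_t^{k-1} satisfies x_t → 0. -/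
open Finset Filter

/-- If `λ` is the Z-spectral radius (max of `|λ_r|` in the orthogonal decomposition)
and `λ^{1/(k-2)} ‖x_0‖ < 1`, the trajectory converges to `0`. -/
theorem stmt4 (n k : ℕ) (hk : 3 ≤ k)
    (lam : Fin n → ℝ) (v : Fin n → EuclideanSpace ℝ (Fin n))
    (hv : Orthonormal ℝ v)
    (x : ℕ → EuclideanSpace ℝ (Fin n))
    (hdyn : ∀ t, x (t + 1) = ∑ r, (lam r * (inner ℝ (v r) (x t) : ℝ) ^ (k - 1)) • v r)
    (lam0 : ℝ) (hgr : IsGreatest (Set.range fun r => |lam r|) lam0)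
    (hcond : lam0 ^ ((1 : ℝ) / ((k : ℝ) - 2)) * ‖x 0‖ < 1) :
    Tendsto x atTop (nhds 0) := by
  obtain ⟨r0, hr0⟩ := hgr.1
  have hlam0 : 0 ≤ lam0 := hr0 ▸ abs_nonneg _
  have hub : ∀ r, |lam r| ≤ lam0 := fun r => hgr.2 ⟨r, rfl⟩
  -- Key inequality: ‖x (t+1)‖ ≤ lam0 * ‖x t‖ ^ (k-1)
  have key : ∀ t, ‖x (t + 1)‖ ≤ lam0 * ‖x t‖ ^ (k - 1) := by
    intro t
    set c : Fin n → ℝ := fun r => (inner ℝ (v r) (x t) : ℝ) with hc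
    have hbessel : ∑ r, c r ^ 2 ≤ ‖x t‖ ^ 2 := by
      have := hv.sum_inner_products_le (s := Finset.univ) (x t)
      simpa [Real.norm_eq_abs, sq_abs] using this
    have hnormsq : ‖x (t + 1)‖ ^ 2 = ∑ r, (lam r * c r ^ (k - 1)) ^ 2 := by
      rw [hdyn t, ← real_inner_self_eq_norm_sq]
      have := hv.inner_sum (fun r => lam r * c r ^ (k - 1))
        (fun r => lam r * c r ^ (k - 1)) Finset.univ
      simpa [sq] using this
    have hbound : ∑ r, (lam r * c r ^ (k - 1)) ^ 2
        ≤ (lam0 * ‖x t‖ ^ (k - 1)) ^ 2 := by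
      have hstep : ∀ r : Fin n, (lam r * c r ^ (k - 1)) ^ 2
          ≤ lam0 ^ 2 * (c r ^ 2 * (‖x t‖ ^ 2) ^ (k - 2)) := by
        intro r
        have h1 : (lam r) ^ 2 ≤ lam0 ^ 2 := by
          have := hub r
          nlinarith [abs_nonneg (lam r), sq_abs (lam r)]
        have hcr : c r ^ 2 ≤ ‖x t‖ ^ 2 := by
          have h := hbessel
          calc c r ^ 2 ≤ ∑ s, c s ^ 2 :=
                Finset.single_le_sum (fun s _ => sq_nonneg (c s)) (Finset.mem_univ r)
            _ ≤ ‖x t‖ ^ 2 := h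
        have h2 : (c r ^ (k - 1)) ^ 2 ≤ c r ^ 2 * (‖x t‖ ^ 2) ^ (k - 2) := by
          have hk1 : k - 1 = (k - 2) + 1 := by omega
          have : (c r ^ (k - 1)) ^ 2 = c r ^ 2 * (c r ^ 2) ^ (k - 2) := by
            rw [hk1]; ring
          rw [this]
          exact mul_le_mul_of_nonneg_left
            (pow_le_pow_left₀ (sq_nonneg _) hcr _) (sq_nonneg _)
        calc (lam r * c r ^ (k - 1)) ^ 2 = (lam r) ^ 2 * (c r ^ (k - 1)) ^ 2 := by ring
          _ ≤ lam0 ^ 2 * (c r ^ 2 * (‖x t‖ ^ 2) ^ (k - 2)) := by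
              apply mul_le_mul h1 h2 (sq_nonneg _) (sq_nonneg _)
      calc ∑ r, (lam r * c r ^ (k - 1)) ^ 2
          ≤ ∑ r, lam0 ^ 2 * (c r ^ 2 * (‖x t‖ ^ 2) ^ (k - 2)) :=
            Finset.sum_le_sum fun r _ => hstep r
        _ = lam0 ^ 2 * (‖x t‖ ^ 2) ^ (k - 2) * ∑ r, c r ^ 2 := by
            rw [Finset.mul_sum]; congr 1; ext r; ring
        _ ≤ lam0 ^ 2 * (‖x t‖ ^ 2) ^ (k - 2) * ‖x t‖ ^ 2 := by
            apply mul_le_mul_of_nonneg_left hbessel (by positivity)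
        _ = (lam0 * ‖x t‖ ^ (k - 1)) ^ 2 := by
            have hk1 : k - 1 = (k - 2) + 1 := by omega
            rw [hk1]; ring
    have h2 : ‖x (t + 1)‖ ^ 2 ≤ (lam0 * ‖x t‖ ^ (k - 1)) ^ 2 := hnormsq ▸ hbound
    have hrhs : 0 ≤ lam0 * ‖x t‖ ^ (k - 1) := by positivity
    nlinarith [norm_nonneg (x (t + 1))]
  rcases eq_or_lt_of_le hlam0 with hz | hpos
  · -- lam0 = 0 : trajectory is eventually 0
    have hzero : ∀ t, x (t + 1) = 0 := by
      intro t
      have h := key t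
      rw [← hz] at h
      simp only [zero_mul] at h
      exact norm_le_zero_iff.mp h
    have : x =ᶠ[atTop] fun _ => (0 : EuclideanSpace ℝ (Fin n)) := by
      filter_upwards [eventually_ge_atTop 1] with t ht
      obtain ⟨s, rfl⟩ := Nat.exists_eq_add_of_le ht
      simpa [Nat.add_comm] using hzero s
    exact Tendsto.congr' this.symm tendsto_const_nhds
  · set L : ℝ := lam0 ^ ((1 : ℝ) / ((k : ℝ) - 2)) with hL
    have hk2 : ((k : ℝ) - 2) ≠ 0 := by
      have : (3 : ℝ) ≤ (k : ℝ) := by exact_mod_cast hk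
      linarith
    have hLpos : 0 < L := Real.rpow_pos_of_pos hpos _
    have hLk2 : L ^ (k - 2) = lam0 := by
      rw [hL, ← Real.rpow_natCast (lam0 ^ ((1 : ℝ) / ((k : ℝ) - 2))) (k - 2),
        ← Real.rpow_mul hlam0]
      have hcast : ((k - 2 : ℕ) : ℝ) = (k : ℝ) - 2 := by
        have : (2 : ℕ) ≤ k := by omega
        push_cast [this]; ring
      rw [hcast, one_div, inv_mul_cancel₀ hk2, Real.rpow_one]
    set y : ℕ → ℝ := fun t => L * ‖x t‖ with hy
    have hy0 : y 0 < 1 := hcond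
    have hynn : ∀ t, 0 ≤ y t := fun t => by positivity
    have hykey : ∀ t, y (t + 1) ≤ y t ^ (k - 1) := by
      intro t
      have h := key t
      have : L * ‖x (t + 1)‖ ≤ L * (lam0 * ‖x t‖ ^ (k - 1)) :=
        mul_le_mul_of_nonneg_left h hLpos.le
      calc y (t + 1) ≤ L * (lam0 * ‖x t‖ ^ (k - 1)) := this
        _ = y t ^ (k - 1) := by
            have hk1 : k - 1 = (k - 2) + 1 := by omega
            rw [hy, ← hLk2, hk1]; ring
    have hdecay : ∀ t, y t ≤ y 0 ^ (t + 1) := by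
      intro t
      induction t with
      | zero => simp
      | succ s ih =>
        calc y (s + 1) ≤ y s ^ (k - 1) := hykey s
          _ ≤ (y 0 ^ (s + 1)) ^ (k - 1) := pow_le_pow_left₀ (hynn s) ih _
          _ = y 0 ^ ((s + 1) * (k - 1)) := by rw [← pow_mul]
          _ ≤ y 0 ^ (s + 2) := by
              apply pow_le_pow_of_le_one (hynn 0) hy0.le
              calc s + 2 ≤ (s + 1) * 2 := by omega
                _ ≤ (s + 1) * (k - 1) := Nat.mul_le_mul_left _ (by omega)
    have hnorm : Tendsto (fun t => ‖x t‖) atTop (nhds 0) := by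
      apply squeeze_zero (fun t => norm_nonneg _) (g := fun t => (1 / L) * y 0 ^ (t + 1))
      · intro t
        have := hdecay t
        rw [hy] at this
        calc ‖x t‖ = (1 / L) * (L * ‖x t‖) := by field_simp
          _ ≤ (1 / L) * y 0 ^ (t + 1) := by
              apply mul_le_mul_of_nonneg_left this (by positivity)
      · have hgeo : Tendsto (fun t : ℕ => y 0 ^ t) atTop (nhds 0) :=
          tendsto_pow_atTop_nhds_zero_of_lt_one (hynn 0) hy0
        have := (hgeo.comp (tendsto_add_atTop_nat 1)).const_mul (1 / L)
        simpa using this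
    rw [tendsto_zero_iff_norm_tendsto_zero]
    exact hnorm
end

section
/- Let A be an even-order (order 2m, m ≥ 1) supersymmetric tensor on ℝ^n, and let ψ(A) ∈ ℝ^{n^m × n^m} be its square unfolding, defined by A_{j_1 i_1 … j_m i_m} = ψ(A)_{j i} with j = j_1 + Σ_{p=2}^m (j_p−1)n^{p−1} and i = i_1 + Σ_{p=2}^m (i_p−1)n^{p−1}. Then every Z-eigenvalue λ of A (i.e., λ ∈ ℝ with A v^{2m−1} = λ v and ‖v‖ = 1 for some v ∈ ℝ^n) satisfies |λ| ≤ ρ(ψ(A)), the spectral radius of ψ(A). -/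
open Finset

/-- Build a full index from a leading index `i` and the rest `f`. -/
def ins {n k : ℕ} (i : Fin n) (f : Fin (k - 1) → Fin n) : Fin k → Fin n :=
  fun p => if h : (p : ℕ) = 0 then i else f ⟨(p : ℕ) - 1, by have := p.isLt; omega⟩

/-- The tensor-vector contraction `(A v^{k-1})_i`. -/
noncomputable def tvec {n k : ℕ} (A : (Fin k → Fin n) → ℝ) (v : Fin n → ℝ) : Fin n → ℝ :=
  fun i => ∑ f : Fin (k - 1) → Fin n, A (ins i f) * ∏ p, v (f p)

/-- Transfer eigenvalues from `toEuclideanLin` to `toLin'`. -/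
lemma transfer_eig {ι : Type*} [Fintype ι] [DecidableEq ι] (M : Matrix ι ι ℝ) (μ : ℝ)
    (h : Module.End.HasEigenvalue (Matrix.toEuclideanLin M) μ) :
    Module.End.HasEigenvalue (Matrix.toLin' M) μ := by
  obtain ⟨x, hx⟩ := h.exists_hasEigenvector
  have hx1 : Matrix.toEuclideanLin M x = μ • x := hx.apply_eq_smul
  set x' : ι → ℝ := (WithLp.equiv 2 (ι → ℝ)) x with hx'
  have hx'0 : x' ≠ 0 := by
    simpa [hx', WithLp.equiv] using hx.2
  have hmain : Matrix.toLin' M x' = μ • x' := by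
    rw [Matrix.toLin'_apply]
    have := congrArg (WithLp.equiv 2 (ι → ℝ)) hx1
    rw [Matrix.toEuclideanLin_apply] at this
    simpa [hx', WithLp.equiv] using this
  exact Module.End.hasEigenvalue_of_hasEigenvector
    ⟨Module.End.mem_eigenspace_iff.2 hmain, hx'0⟩

/-- Product over a full index built by `ins` splits off the leading factor. -/
lemma prod_ins {n k : ℕ} (hk : 1 ≤ k) (u : Fin n → ℝ) (i : Fin n) (f : Fin (k - 1) → Fin n) :
    ∏ q : Fin k, u (ins i f q) = u i * ∏ p, u (f p) := by
  obtain ⟨s, rfl⟩ : ∃ s, k = s + 1 := ⟨k - 1, by omega⟩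
  rw [Fin.prod_univ_succ]
  have e0 : ins (k := s + 1) i f 0 = i := by simp [ins]
  have e1 : ∀ p : Fin s, ins (k := s + 1) i f p.succ = f p := by
    intro p
    have hz : ((p.succ : Fin (s + 1)) : ℕ) ≠ 0 := by simp
    simp only [ins, dif_neg hz]
    apply congrArg
    ext
    simp
  show u (ins (k := s + 1) i f 0) * ∏ p : Fin s, u (ins (k := s + 1) i f p.succ) =
    u i * ∏ p : Fin s, u (f p)
  rw [e0]
  exact congrArg _ (Finset.prod_congr rfl fun p _ => by rw [e1 p])

/-- Every Z-eigenvalue of an even-order (order `2m`) supersymmetric tensor is bounded in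
absolute value by the spectral radius (the largest absolute value of an eigenvalue)
of its square unfolding `ψ(A)`. -/
theorem stmt8 (n m : ℕ) (hm : 1 ≤ m) (A : (Fin (m + m) → Fin n) → ℝ)
    (hsym : ∀ (σ : Equiv.Perm (Fin (m + m))) (f : Fin (m + m) → Fin n), A (f ∘ σ) = A f)
    (ψA : Matrix (Fin m → Fin n) (Fin m → Fin n) ℝ)
    (hψ : ∀ J I : Fin m → Fin n, ψA J I = A (Fin.append J I))
    (lam : ℝ) (v : Fin n → ℝ) (hunit : ∑ i, v i ^ 2 = 1)
    (heig : ∀ i, tvec A v i = lam * v i)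
    (ρ : ℝ)
    (hρ : IsGreatest {x : ℝ | ∃ μ : ℝ, Module.End.HasEigenvalue (Matrix.toLin' ψA) μ ∧ x = |μ|} ρ) :
    |lam| ≤ ρ := by
  classical
  -- n must be positive
  rcases Nat.eq_zero_or_pos n with hn | hn
  · subst hn
    simp at hunit
  -- the symmetric half
  have hherm : ψA.IsHermitian := by
    have hswap : ∀ J I : Fin m → Fin n, A (Fin.append I J) = A (Fin.append J I) := by
      intro J I
      have hcomp : (Fin.append J I) ∘ (finAddFlip : Fin (m + m) ≃ Fin (m + m)) =
          Fin.append I J := by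
        funext q
        induction q using Fin.addCases with
        | left p =>
            rw [Function.comp_apply, finAddFlip_apply_castAdd, Fin.append_right, Fin.append_left]
        | right p =>
            rw [Function.comp_apply, finAddFlip_apply_natAdd, Fin.append_left, Fin.append_right]
      calc A (Fin.append I J) = A ((Fin.append J I) ∘ finAddFlip) := by rw [hcomp]
        _ = A (Fin.append J I) := hsym _ _
    ext J I
    simp only [Matrix.conjTranspose_apply, star_trivial, hψ]
    exact hswap J I
  -- the Perron vector
  set w : (Fin m → Fin n) → ℝ := fun J => ∏ p, v (J p) with hwdef
  have hwnorm : ∑ J, w J ^ 2 = 1 := by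
    have h1 : ∑ J : Fin m → Fin n, ∏ p, (v (J p)) ^ 2 = ∏ _p : Fin m, ∑ i, v i ^ 2 := by
      rw [Finset.prod_univ_sum]
      simp
    simp only [hwdef, ← Finset.prod_pow]
    rw [h1, hunit, Finset.prod_const_one]
  have key : lam = ∑ J, (∑ I, ψA J I * w I) * w J := by
    set S : (Fin (m + m) → Fin n) → ℝ := fun g => A g * ∏ q, v (g q) with hS
    have h1 : lam = ∑ i, v i * tvec A v i := by
      have e1 : ∑ i, v i * tvec A v i = ∑ i, v i * (lam * v i) :=
        Finset.sum_congr rfl fun i _ => by rw [heig]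
      have e2 : ∑ i, v i * (lam * v i) = lam * ∑ i, v i ^ 2 := by
        rw [Finset.mul_sum]
        exact Finset.sum_congr rfl fun i _ => by ring
      rw [e1, e2, hunit, mul_one]
    have h2 : lam = ∑ x : Fin n × (Fin (m + m - 1) → Fin n), S (ins x.1 x.2) := by
      rw [h1, Fintype.sum_prod_type]
      refine Finset.sum_congr rfl fun i _ => ?_
      rw [tvec, Finset.mul_sum]
      refine Finset.sum_congr rfl fun f _ => ?_
      have hins : ∏ q : Fin (m + m), v (ins i f q) = v i * ∏ p, v (f p) := prod_ins (by omega) v i f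
      show v i * (A (ins i f) * ∏ p, v (f p)) = A (ins i f) * ∏ q : Fin (m + m), v (ins i f q)
      rw [hins]
      ring
    have h3 : ∑ x : Fin n × (Fin (m + m - 1) → Fin n), S (ins x.1 x.2) = ∑ g, S g := by
      refine Fintype.sum_bijective (fun x : Fin n × (Fin (m + m - 1) → Fin n) => ins x.1 x.2)
        ?_ _ _ (fun x => rfl)
      refine Function.bijective_iff_has_inverse.2
        ⟨fun g => (g ⟨0, by omega⟩, fun q => g ⟨(q : ℕ) + 1, by have := q.isLt; omega⟩), ?_, ?_⟩
      · rintro ⟨i, f⟩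
        refine Prod.ext ?_ ?_
        · simp [ins]
        · funext q
          show ins i f ⟨(q : ℕ) + 1, _⟩ = f q
          rw [ins, dif_neg (by simp)]
          apply congrArg
          apply Fin.ext
          show (q : ℕ) + 1 - 1 = (q : ℕ)
          omega
      · intro g
        funext p
        by_cases hp : (p : ℕ) = 0
        · show ins _ _ p = g p
          rw [ins, dif_pos hp]
          exact congrArg g (Fin.ext (by simp [hp.symm]))
        · show ins _ _ p = g p
          rw [ins, dif_neg hp]
          show g ⟨(p : ℕ) - 1 + 1, _⟩ = g p
          congr 1
          apply Fin.ext
          show (p : ℕ) - 1 + 1 = (p : ℕ)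
          omega
    have h4 : ∑ x : (Fin (m) → Fin n) × (Fin (m) → Fin n),
        S (Fin.append x.1 x.2) = ∑ g, S g := by
      refine Fintype.sum_bijective
        (fun x : (Fin (m) → Fin n) × (Fin (m) → Fin n) => Fin.append x.1 x.2)
        ?_ _ _ (fun x => rfl)
      refine Function.bijective_iff_has_inverse.2
        ⟨fun g => (fun p => g (Fin.castAdd (m) p), fun p => g (Fin.natAdd (m) p)),
          ?_, ?_⟩
      · rintro ⟨J, I⟩
        refine Prod.ext ?_ ?_
        · funext p; exact Fin.append_left J I p
        · funext p; exact Fin.append_right J I p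
      · intro g
        funext q
        induction q using Fin.addCases with
        | left p => exact Fin.append_left _ _ p
        | right p => exact Fin.append_right _ _ p
    have h5 : ∀ J I : Fin (m) → Fin n,
        S (Fin.append J I) = ψA J I * w I * w J := by
      intro J I
      have hprod : ∏ q : Fin (m + m), v (Fin.append J I q) = w J * w I := by
        rw [Fin.prod_univ_add]
        simp only [Fin.append_left, Fin.append_right, hwdef]
      show A (Fin.append J I) * ∏ q : Fin (m + m), v (Fin.append J I q) = ψA J I * w I * w J
      rw [hprod, hψ]
      ring
    calc lam = ∑ x : Fin n × (Fin (m + m - 1) → Fin n), S (ins x.1 x.2) := h2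
      _ = ∑ g, S g := h3
      _ = ∑ x : (Fin (m) → Fin n) × (Fin (m) → Fin n),
            S (Fin.append x.1 x.2) := h4.symm
      _ = ∑ J, ∑ I, ψA J I * w I * w J := by
            rw [Fintype.sum_prod_type]
            exact Finset.sum_congr rfl fun J _ =>
              Finset.sum_congr rfl fun I _ => h5 J I
      _ = ∑ J, (∑ I, ψA J I * w I) * w J := by
            exact Finset.sum_congr rfl fun J _ => (Finset.sum_mul _ _ _).symm
  -- analytic half
  have hne : Nonempty (Fin m → Fin n) := ⟨fun _ => ⟨0, hn⟩⟩
  haveI : Nontrivial (EuclideanSpace ℝ (Fin m → Fin n)) := by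
    refine ⟨0, (WithLp.equiv 2 _).symm (fun _ => 1), fun h => ?_⟩
    have h2 := congrArg (fun z => (WithLp.equiv 2 ((Fin m → Fin n) → ℝ)) z hne.some) h
    simp at h2
  set T : EuclideanSpace ℝ (Fin m → Fin n) →ₗ[ℝ] EuclideanSpace ℝ (Fin m → Fin n) :=
    Matrix.toEuclideanLin ψA with hT
  have hsymT : T.IsSymmetric := Matrix.isHermitian_iff_isSymmetric.1 hherm
  set W : EuclideanSpace ℝ (Fin m → Fin n) := (WithLp.equiv 2 _).symm w with hW
  have hWin : (inner ℝ W W : ℝ) = 1 := by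
    rw [PiLp.inner_apply]
    simpa [RCLike.inner_apply, hW, WithLp.equiv, ← sq] using hwnorm
  have hWnorm : ‖W‖ ^ 2 = 1 := by rw [← real_inner_self_eq_norm_sq]; exact hWin
  have hW0 : W ≠ 0 := by
    intro h0
    rw [h0] at hWnorm
    simp at hWnorm
  have hray : RCLike.re (inner ℝ (T W) W : ℝ) / ‖W‖ ^ 2 = lam := by
    rw [hWnorm, div_one]
    have hTW : ∀ J, (T W) J = ∑ I, ψA J I * w I := by
      intro J
      rw [hT, Matrix.toEuclideanLin_apply]
      rfl
    rw [PiLp.inner_apply, key]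
    simp only [RCLike.inner_apply, starRingEnd_apply, star_trivial]
    refine Finset.sum_congr rfl fun J _ => ?_
    rw [hTW J]
    have hWJ : W J = w J := rfl
    rw [hWJ, mul_comm]
  -- boundedness of the Rayleigh quotient
  set T' := LinearMap.toContinuousLinearMap T with hT'
  have hTT' : ∀ x, T x = T' x := fun x => rfl
  have hbdd : BddAbove (Set.range fun x : {x : EuclideanSpace ℝ (Fin m → Fin n) // x ≠ 0} =>
      RCLike.re (inner ℝ (T x) x : ℝ) / ‖(x : EuclideanSpace ℝ (Fin m → Fin n))‖ ^ 2) := by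
    refine ⟨‖T'‖, ?_⟩
    rintro y ⟨⟨x, hx⟩, rfl⟩
    have hx' : (0:ℝ) < ‖x‖ := norm_pos_iff.2 hx
    have hxpos : (0:ℝ) < ‖x‖ ^ 2 := by positivity
    rw [div_le_iff₀ hxpos]
    calc RCLike.re (inner ℝ (T x) x : ℝ) ≤ |(inner ℝ (T x) x : ℝ)| := le_abs_self _
      _ ≤ ‖T x‖ * ‖x‖ := abs_real_inner_le_norm _ _
      _ ≤ (‖T'‖ * ‖x‖) * ‖x‖ := by
          gcongr
          rw [hTT']
          exact T'.le_opNorm x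
      _ = ‖T'‖ * ‖x‖ ^ 2 := by ring
  have hbdd' : BddBelow (Set.range fun x : {x : EuclideanSpace ℝ (Fin m → Fin n) // x ≠ 0} =>
      RCLike.re (inner ℝ (T x) x : ℝ) / ‖(x : EuclideanSpace ℝ (Fin m → Fin n))‖ ^ 2) := by
    refine ⟨-‖T'‖, ?_⟩
    rintro y ⟨⟨x, hx⟩, rfl⟩
    have hx' : (0:ℝ) < ‖x‖ := norm_pos_iff.2 hx
    have hxpos : (0:ℝ) < ‖x‖ ^ 2 := by positivity
    rw [le_div_iff₀ hxpos]
    calc -‖T'‖ * ‖x‖ ^ 2 = -((‖T'‖ * ‖x‖) * ‖x‖) := by ring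
      _ ≤ -(‖T x‖ * ‖x‖) := by
          rw [neg_le_neg_iff]
          gcongr
          rw [hTT']
          exact T'.le_opNorm x
      _ ≤ -|(inner ℝ (T x) x : ℝ)| := by
          rw [neg_le_neg_iff]
          exact abs_real_inner_le_norm _ _
      _ ≤ RCLike.re (inner ℝ (T x) x : ℝ) := neg_abs_le _
  set musup : ℝ := ⨆ x : {x : EuclideanSpace ℝ (Fin m → Fin n) // x ≠ 0},
      RCLike.re (inner ℝ (T x) x : ℝ) / ‖(x : EuclideanSpace ℝ (Fin m → Fin n))‖ ^ 2 with hμs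
  set μinf : ℝ := ⨅ x : {x : EuclideanSpace ℝ (Fin m → Fin n) // x ≠ 0},
      RCLike.re (inner ℝ (T x) x : ℝ) / ‖(x : EuclideanSpace ℝ (Fin m → Fin n))‖ ^ 2 with hμi
  have hub : lam ≤ musup := by
    rw [← hray]
    exact le_ciSup hbdd ⟨W, hW0⟩
  have hlb : μinf ≤ lam := by
    rw [← hray]
    exact ciInf_le hbdd' ⟨W, hW0⟩
  have heigsup : Module.End.HasEigenvalue (Matrix.toLin' ψA) musup := by
    have := hsymT.hasEigenvalue_iSup_of_finiteDimensional
    exact transfer_eig _ _ (by simpa [hμs] using this)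
  have heiginf : Module.End.HasEigenvalue (Matrix.toLin' ψA) μinf := by
    have := hsymT.hasEigenvalue_iInf_of_finiteDimensional
    exact transfer_eig _ _ (by simpa [hμi] using this)
  have h1 : musup ≤ ρ := le_trans (le_abs_self _) (hρ.2 ⟨musup, heigsup, rfl⟩)
  have h2 : -ρ ≤ μinf := by
    have := hρ.2 ⟨μinf, heiginf, rfl⟩
    have := neg_abs_le μinf
    linarith [hρ.2 ⟨μinf, heiginf, rfl⟩, neg_abs_le μinf]
  rw [abs_le]
  constructor <;> linarith
end

section
/- Let k ≥ 3 and let A = Σ_r λ_r v_r^{∘k} be odeco with orthonormal basis {v_r} of ℝ^n and all λ_r ≠ 0. Then the set R = { x ∈ ℝ^n : |⟨v_r, x⟩| < |λ_r|^{-1/(k-2)} for all r } is forward invariant under the map x ↦ A x^{k-1}, and every trajectory starting in R converges to 0. -/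
open Finset Filter

/-- The odeco multilinear map `x ↦ A x^{k-1} = ∑_r λ_r ⟨v_r, x⟩^{k-1} v_r`. -/
noncomputable def odecoMap {n : ℕ} (k : ℕ) (lam : Fin n → ℝ)
    (v : Fin n → EuclideanSpace ℝ (Fin n)) (x : EuclideanSpace ℝ (Fin n)) :
    EuclideanSpace ℝ (Fin n) :=
  ∑ r, (lam r * (inner ℝ (v r) x : ℝ) ^ (k - 1)) • v r

lemma inner_odeco {n : ℕ} (k : ℕ) (lam : Fin n → ℝ)
    (v : Fin n → EuclideanSpace ℝ (Fin n)) (hv : Orthonormal ℝ v)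
    (x : EuclideanSpace ℝ (Fin n)) (r : Fin n) :
    (inner ℝ (v r) (odecoMap k lam v x) : ℝ) = lam r * (inner ℝ (v r) x : ℝ) ^ (k - 1) := by
  rw [odecoMap, inner_sum]
  simp only [real_inner_smul_right, orthonormal_iff_ite.mp hv, mul_ite, mul_one, mul_zero,
    Finset.sum_ite_eq, Finset.mem_univ, if_true]

lemma key1 (k : ℕ) (hk : 3 ≤ k) (a : ℝ) (ha : 0 < a) :
    a * (a ^ (-(1:ℝ)/((k:ℝ)-2))) ^ (k - 2) = 1 := by
  rw [← Real.rpow_natCast (a ^ (-(1:ℝ)/((k:ℝ)-2))) (k-2), ← Real.rpow_mul ha.le]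
  have h2 : ((k - 2 : ℕ) : ℝ) = (k:ℝ) - 2 := by
    have : (2:ℕ) ≤ k := by omega
    push_cast [Nat.cast_sub this]; ring
  have hne : (k:ℝ) - 2 ≠ 0 := by
    have : (3:ℝ) ≤ (k:ℝ) := by exact_mod_cast hk
    linarith
  rw [h2, div_mul_cancel₀ _ hne, Real.rpow_neg_one, mul_inv_cancel₀ ha.ne']

/-- The region `R = {x : |⟨v_r, x⟩| < |λ_r|^{-1/(k-2)} ∀ r}` is forward invariant under
`x ↦ A x^{k-1}`, and every trajectory starting in `R` converges to `0`. -/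
theorem stmt12 (n k : ℕ) (hk : 3 ≤ k)
    (lam : Fin n → ℝ) (v : Fin n → EuclideanSpace ℝ (Fin n))
    (hv : Orthonormal ℝ v) (hlam : ∀ r, lam r ≠ 0) :
    (∀ x : EuclideanSpace ℝ (Fin n),
        (∀ r, |(inner ℝ (v r) x : ℝ)| < |lam r| ^ (-(1 : ℝ) / ((k : ℝ) - 2))) →
        ∀ r, |(inner ℝ (v r) (odecoMap k lam v x) : ℝ)| < |lam r| ^ (-(1 : ℝ) / ((k : ℝ) - 2))) ∧
      (∀ x : ℕ → EuclideanSpace ℝ (Fin n),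
        (∀ r, |(inner ℝ (v r) (x 0) : ℝ)| < |lam r| ^ (-(1 : ℝ) / ((k : ℝ) - 2))) →
        (∀ t, x (t + 1) = odecoMap k lam v (x t)) →
        Tendsto x atTop (nhds 0)) := by
  have habs : ∀ r, (0:ℝ) < |lam r| := fun r => abs_pos.mpr (hlam r)
  set B : Fin n → ℝ := fun r => |lam r| ^ (-(1 : ℝ) / ((k : ℝ) - 2)) with hBdef
  have hBpos : ∀ r, 0 < B r := fun r => Real.rpow_pos_of_pos (habs r) _
  have hkey : ∀ r, |lam r| * (B r) ^ (k - 2) = 1 := fun r => key1 k hk _ (habs r)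
  have hk21 : k - 1 = (k - 2) + 1 := by omega
  have hk2ne : k - 2 ≠ 0 := by omega
  have hstep : ∀ (r : Fin n) (c : ℝ), |c| < B r → |lam r * c ^ (k - 1)| < B r := by
    intro r c hc
    have h2 : |c| ^ (k - 1) < B r ^ (k - 1) :=
      pow_lt_pow_left₀ hc (abs_nonneg c) (by omega)
    calc |lam r * c ^ (k - 1)| = |lam r| * |c| ^ (k - 1) := by rw [abs_mul, abs_pow]
      _ < |lam r| * B r ^ (k - 1) := mul_lt_mul_of_pos_left h2 (habs r)
      _ = B r := by rw [hk21, pow_succ, ← mul_assoc, hkey r, one_mul]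
  constructor
  · intro x hx r
    rw [inner_odeco k lam v hv]
    exact hstep r _ (hx r)
  · intro x hx hrec
    have hcoefrec : ∀ r t, (inner ℝ (v r) (x (t + 1)) : ℝ) = lam r * (inner ℝ (v r) (x t) : ℝ) ^ (k - 1) := by
      intro r t; rw [hrec t, inner_odeco k lam v hv]
    have hcoef : ∀ r, Tendsto (fun t => (inner ℝ (v r) (x t) : ℝ)) atTop (nhds 0) := by
      intro r
      set c : ℕ → ℝ := fun t => (inner ℝ (v r) (x t) : ℝ) with hc
      set q : ℝ := |lam r| * |c 0| ^ (k - 2) with hq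
      have hq0 : 0 ≤ q := mul_nonneg (habs r).le (pow_nonneg (abs_nonneg _) _)
      have hq1 : q < 1 := by
        have h2 : |c 0| ^ (k - 2) < B r ^ (k - 2) :=
          pow_lt_pow_left₀ (hx r) (abs_nonneg _) hk2ne
        calc q < |lam r| * B r ^ (k - 2) := mul_lt_mul_of_pos_left h2 (habs r)
          _ = 1 := hkey r
      have hbound : ∀ t, |c t| ≤ |c 0| * q ^ t := by
        intro t
        induction t with
        | zero => simp
        | succ t ih =>
          have hle : |c t| ≤ |c 0| := by
            calc |c t| ≤ |c 0| * q ^ t := ih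
              _ ≤ |c 0| * 1 := by
                  exact mul_le_mul_of_nonneg_left (pow_le_one₀ hq0 hq1.le) (abs_nonneg _)
              _ = |c 0| := mul_one _
          have hmono : |c t| ^ (k - 2) ≤ |c 0| ^ (k - 2) :=
            pow_le_pow_left₀ (abs_nonneg _) hle _
          calc |c (t + 1)| = |lam r| * |c t| ^ (k - 1) := by
                show |(inner ℝ (v r) (x (t + 1)) : ℝ)| = _
                rw [hcoefrec r t, abs_mul, abs_pow]
            _ = (|lam r| * |c t| ^ (k - 2)) * |c t| := by rw [hk21, pow_succ]; ring
            _ ≤ (|lam r| * |c 0| ^ (k - 2)) * |c t| := by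
                apply mul_le_mul_of_nonneg_right _ (abs_nonneg _)
                exact mul_le_mul_of_nonneg_left hmono (habs r).le
            _ = q * |c t| := rfl
            _ ≤ q * (|c 0| * q ^ t) := mul_le_mul_of_nonneg_left ih hq0
            _ = |c 0| * q ^ (t + 1) := by ring
      have hg : Tendsto (fun t => |c 0| * q ^ t) atTop (nhds 0) := by
        have := (tendsto_pow_atTop_nhds_zero_of_lt_one hq0 hq1).const_mul (|c 0|)
        simpa using this
      have habs' : Tendsto (fun t => |c t|) atTop (nhds 0) :=
        squeeze_zero (fun t => abs_nonneg _) hbound hg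
      exact tendsto_zero_iff_abs_tendsto_zero c |>.mpr habs'
    have hx1 : ∀ t, x (t + 1) = ∑ r, ((inner ℝ (v r) (x (t + 1)) : ℝ)) • v r := by
      intro t
      have h : ∑ r, ((inner ℝ (v r) (x (t + 1)) : ℝ)) • v r
          = ∑ r, (lam r * (inner ℝ (v r) (x t) : ℝ) ^ (k - 1)) • v r :=
        Finset.sum_congr rfl fun r _ => by rw [hcoefrec r t]
      rw [h, hrec t, odecoMap]
    have hshift : Tendsto (fun t => x (t + 1)) atTop (nhds 0) := by
      have h0 : Tendsto (fun t => ∑ r, ((inner ℝ (v r) (x (t + 1)) : ℝ)) • v r) atTop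
          (nhds (∑ r : Fin n, (0 : ℝ) • v r)) := by
        refine tendsto_finset_sum _ fun r _ => ?_
        exact ((hcoef r).comp (tendsto_add_atTop_nat 1)).smul_const (v r)
      have h0' : Tendsto (fun t => ∑ r, ((inner ℝ (v r) (x (t + 1)) : ℝ)) • v r) atTop (nhds 0) := by
        simpa using h0
      exact h0'.congr fun t => (hx1 t).symm
    exact (tendsto_add_atTop_iff_nat 1).mp hshift
end

section
/- Let A be a k-th order tensor on ℝ^n with all entries positive, and suppose (λ, v) is a Z-eigenpair with λ equal to the Z-spectral radius attained at a nonnegative unit vector v. Then λ ≤ R, where R = max_j Σ_{j_2,…,j_k} A_{j j_2 … j_k}. -/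
open Finset

/-- For a positive tensor, a Z-eigenvalue attained at a nonnegative unit vector is bounded
by `R = max_j ∑_{j_2,…,j_k} A_{j j_2 … j_k}`. -/
theorem stmt16 (n k : ℕ) (hk : 2 ≤ k) (A : (Fin k → Fin n) → ℝ)
    (hpos : ∀ f, 0 < A f)
    (lam : ℝ) (v : Fin n → ℝ) (hunit : ∑ i, v i ^ 2 = 1) (hvnn : ∀ i, 0 ≤ v i)
    (heig : ∀ i, tvec A v i = lam * v i)
    (R : ℝ)
    (hR : IsGreatest (Set.range fun j : Fin n => ∑ f : Fin (k - 1) → Fin n, A (ins j f)) R) :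
    lam ≤ R := by
  -- n ≥ 1
  have hn : 0 < n := by
    by_contra h
    push_neg at h
    interval_cases n
    simp at hunit
  -- pick j maximizing v
  obtain ⟨j, -, hjmax⟩ := Finset.exists_max_image (univ : Finset (Fin n)) v
    (univ_nonempty_iff.mpr ⟨⟨0, hn⟩⟩)
  -- v j > 0
  have hvj : 0 < v j := by
    by_contra h
    push_neg at h
    have hall : ∀ i, v i = 0 := fun i =>
      le_antisymm (le_trans (hjmax i (mem_univ i)) h) (hvnn i)
    simp [hall] at hunit
  -- v j ≤ 1
  have hvj1 : v j ≤ 1 := by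
    nlinarith [Finset.single_le_sum (f := fun i => v i ^ 2)
      (fun i _ => sq_nonneg (v i)) (mem_univ j)]
  -- key bound: lam * v j ≤ (∑ A) * v j
  have key : lam * v j ≤ (∑ f : Fin (k - 1) → Fin n, A (ins j f)) * v j := by
    rw [← heig j]
    rw [tvec, Finset.sum_mul]
    apply Finset.sum_le_sum
    intro f _
    have hA := (hpos (ins j f)).le
    apply mul_le_mul_of_nonneg_left _ hA
    calc ∏ p, v (f p) ≤ ∏ _p : Fin (k-1), v j :=
          Finset.prod_le_prod (fun p _ => hvnn _) (fun p _ => hjmax _ (mem_univ _))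
      _ = v j ^ (k - 1) := by rw [Finset.prod_const, card_univ, Fintype.card_fin]
      _ ≤ v j ^ 1 := pow_le_pow_of_le_one (hvnn j) hvj1 (by omega)
      _ = v j := pow_one _
  have hRj : (∑ f : Fin (k - 1) → Fin n, A (ins j f)) ≤ R := hR.2 ⟨j, rfl⟩
  have := le_of_mul_le_mul_right (le_trans key (mul_le_mul_of_nonneg_right hRj hvj.le)) hvj
  exact this
end
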